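/- Let F be a field, N, Q positive integers, and fix witness vectors a, b, c ∈ F^N and public data u_q, v_q, w_q ∈ F^N, k_q ∈ F for q = 1,…,Q. The Laurent polynomial 𝒞[Y] = Σ_{i=1}^N (a_i b_i − c_i)(Y^i + Y^{−i}) + Σ_{q=1}^Q (a·u_q + b·v_q + c·w_q − k_q) Y^{q+N} is the zero Laurent polynomial if and only if a_i·b_i = c_i for all 1 ≤ i ≤ N and a·u_q + b·v_q + c·w_q = k_q for all 1 ≤ q ≤ Q. -/

import Mathlib

open LaurentPolynomial

theorem constraint_poly_eq_zero_iff_satisfied (F : Type*) [Field F] (N Q : ℕ)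
    (hN : 0 < N) (hQ : 0 < Q)
    (a b c : Fin N → F) (u v w : Fin Q → Fin N → F) (k : Fin Q → F) :
    ((∑ i : Fin N, LaurentPolynomial.C (a i * b i - c i) *
          (LaurentPolynomial.T ((i : ℤ) + 1) + LaurentPolynomial.T (-((i : ℤ) + 1)))) +
        (∑ q : Fin Q, LaurentPolynomial.C
          ((∑ j, a j * u q j) + (∑ j, b j * v q j) + (∑ j, c j * w q j) - k q) *
          LaurentPolynomial.T ((q : ℤ) + 1 + (N : ℤ))) = 0)
      ↔ ((∀ i, a i * b i = c i) ∧
          (∀ q, (∑ j, a j * u q j) + (∑ j, b j * v q j) + (∑ j, c j * w q j) = k q)) := by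
  constructor
  · intro h
    have key : ∀ n : ℤ,
        (∑ i : Fin N, ((if (i : ℤ) + 1 = n then a i * b i - c i else 0)
            + (if -((i : ℤ) + 1) = n then a i * b i - c i else 0)))
          + ∑ q : Fin Q, (if (q : ℤ) + 1 + (N : ℤ) = n then
              ((∑ j, a j * u q j) + (∑ j, b j * v q j) + (∑ j, c j * w q j) - k q) else 0)
          = (0 : F) := by
      intro n
      have h' := congrArg ((Finsupp.applyAddHom (M := F) n).comp (AddMonoidAlgebra.coeffAddEquiv (R := F) (M := ℤ)).toAddMonoidHom) h
      rw [map_add, map_sum, map_sum, map_zero] at h'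
      simp only [mul_add, map_add, ← single_eq_C_mul_T] at h'
      simpa only [AddMonoidHom.coe_comp, Function.comp_apply, AddEquiv.coe_toAddMonoidHom, AddMonoidAlgebra.coeffAddEquiv_apply, AddMonoidAlgebra.coeff_single, Finsupp.applyAddHom_apply, Finsupp.single_apply] using h'
    refine ⟨fun i => ?_, fun q => ?_⟩
    · have hk := key ((i : ℤ) + 1)
      have hpos : ∀ j : Fin N, ¬ (-((j : ℤ) + 1) = (i : ℤ) + 1) := fun j hj => by omega
      have hq : ∀ q : Fin Q, ¬ ((q : ℤ) + 1 + (N : ℤ) = (i : ℤ) + 1) := fun q hq' => by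
        have := i.isLt; omega
      simp only [if_neg (hpos _), if_neg (hq _), add_zero, Finset.sum_const_zero] at hk
      rw [Finset.sum_eq_single i
        (fun j _ hj => if_neg (fun hh => hj (Fin.ext (by omega)))) (by simp)] at hk
      simp only [eq_self_iff_true, if_true, add_zero] at hk
      linear_combination hk
    · have hk := key ((q : ℤ) + 1 + (N : ℤ))
      have h1 : ∀ j : Fin N, ¬ ((j : ℤ) + 1 = (q : ℤ) + 1 + (N : ℤ)) := fun j hj => by
        have := j.isLt; omega
      have h2 : ∀ j : Fin N, ¬ (-((j : ℤ) + 1) = (q : ℤ) + 1 + (N : ℤ)) := fun j hj => by omega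
      simp only [if_neg (h1 _), if_neg (h2 _), add_zero, Finset.sum_const_zero, zero_add] at hk
      rw [Finset.sum_eq_single q
        (fun p _ hp => if_neg (fun hh => hp (Fin.ext (by omega)))) (by simp)] at hk
      simp only [eq_self_iff_true, if_true] at hk
      linear_combination hk
  · rintro ⟨h1, h2⟩
    have e1 : ∀ i : Fin N, a i * b i - c i = 0 := fun i => by rw [h1 i]; ring
    simp [e1, h2]
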